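/- If G is dynamically ℓ-minimal in a hereditary graph class F with ℓ ≥ 5, and a vertex u of G lies on a triangle, then the degree of u is at least ℓ. -/

import Mathlib

open Finset

open scoped Classical in
noncomputable def deg {V : Type*} [Fintype V] (G : SimpleGraph V) (v : V) : ℕ :=
  (Finset.univ.filter (fun u => G.Adj v u)).card

def IsProper {V : Type*} (G : SimpleGraph V) (c : V → ℕ) : Prop :=
  ∀ u v, G.Adj u v → c u ≠ c v

def IsDynamic {V : Type*} [Fintype V] (G : SimpleGraph V) (c : V → ℕ) : Prop :=
  IsProper G c ∧ ∀ v, 2 ≤ deg G v → ∃ a b, G.Adj v a ∧ G.Adj v b ∧ c a ≠ c b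

noncomputable def chrom {V : Type*} (G : SimpleGraph V) : ℕ :=
  sInf {n | ∃ c : V → ℕ, (∀ v, c v < n) ∧ IsProper G c}

noncomputable def dynChrom {V : Type*} [Fintype V] (G : SimpleGraph V) : ℕ :=
  sInf {n | ∃ c : V → ℕ, (∀ v, c v < n) ∧ IsDynamic G c}

def subdiv {V : Type*} (G : SimpleGraph V) : SimpleGraph (V ⊕ G.edgeSet) where
  Adj x y :=
    match x, y with
    | Sum.inl u, Sum.inr e => u ∈ (e : Sym2 V)
    | Sum.inr e, Sum.inl u => u ∈ (e : Sym2 V)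
    | _, _ => False
  symm := ⟨by rintro (u | e) (v | f) h <;> first | exact h | exact h.elim⟩
  loopless := ⟨by rintro (u | e) h <;> exact h⟩

noncomputable instance {V : Type*} [Fintype V] (G : SimpleGraph V) : Fintype G.edgeSet :=
  Fintype.ofFinite _

def Choosable {V : Type*} (G : SimpleGraph V) (ℓ : ℕ) : Prop :=
  ∀ L : V → Finset ℕ, (∀ v, (L v).card = ℓ) →
    ∃ c : V → ℕ, (∀ v, c v ∈ L v) ∧ IsProper G c

def DynChoosable {V : Type*} [Fintype V] (G : SimpleGraph V) (ℓ : ℕ) : Prop :=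
  ∀ L : V → Finset ℕ, (∀ v, (L v).card = ℓ) →
    ∃ c : V → ℕ, (∀ v, c v ∈ L v) ∧ IsDynamic G c

noncomputable def listChrom {V : Type*} (G : SimpleGraph V) : ℕ :=
  sInf {ℓ | Choosable G ℓ}

noncomputable def dynListChrom {V : Type*} [Fintype V] (G : SimpleGraph V) : ℕ :=
  sInf {ℓ | DynChoosable G ℓ}

open scoped Classical in
noncomputable def nedges {n : ℕ} (G : SimpleGraph (Fin n)) : ℕ :=
  (Finset.univ.filter (fun e : Sym2 (Fin n) => e ∈ G.edgeSet)).card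

noncomputable def gsize {n : ℕ} (G : SimpleGraph (Fin n)) : ℕ := n + nedges G

/-- `F` is hereditary: it is closed under taking subgraphs (up to isomorphism). -/
def Hereditary (F : ∀ n : ℕ, SimpleGraph (Fin n) → Prop) : Prop :=
  ∀ (n m : ℕ) (G : SimpleGraph (Fin n)) (H : SimpleGraph (Fin m)),
    F n G → (∃ f : Fin m ↪ Fin n, ∀ u v, H.Adj u v → G.Adj (f u) (f v)) → F m H

/-- `G` is dynamically `ℓ`-minimal in the class `F`. -/
def DynMinimal (F : ∀ n : ℕ, SimpleGraph (Fin n) → Prop) (ℓ : ℕ)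
    {n : ℕ} (G : SimpleGraph (Fin n)) : Prop :=
  F n G ∧ ¬ DynChoosable G ℓ ∧
    ∀ (m : ℕ) (H : SimpleGraph (Fin m)), F m H → gsize H < gsize G → DynChoosable H ℓ

/-! ### Auxiliary greedy coloring machinery -/

noncomputable def greedyC {n : ℕ} (base : Fin n → ℕ) (S : Finset (Fin n))
    (pick : Fin n → (Fin n → ℕ) → ℕ) : ℕ → Fin n → ℕ
  | 0 => base
  | (k+1) => fun x => if x.val = k ∧ x ∈ S then pick x (greedyC base S pick k) else
      greedyC base S pick k x

lemma greedyC_stable {n : ℕ} (base : Fin n → ℕ) (S : Finset (Fin n))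
    (pick : Fin n → (Fin n → ℕ) → ℕ) {j k : ℕ} (h : j ≤ k) (x : Fin n)
    (hx : x ∉ S ∨ x.val < j) :
    greedyC base S pick k x = greedyC base S pick j x := by
  induction k with
  | zero => have : j = 0 := Nat.le_zero.mp h; simp [this]
  | succ k ih =>
    rcases Nat.eq_or_lt_of_le h with rfl | h'
    · rfl
    · have hj := Nat.lt_succ_iff.mp h'
      rw [← ih hj]
      show (if x.val = k ∧ x ∈ S then _ else _) = _
      rw [if_neg]
      rintro ⟨hk, hS⟩
      rcases hx with h1 | h1
      · exact h1 hS
      · omega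

lemma greedyC_spec {n : ℕ} (base : Fin n → ℕ) (S : Finset (Fin n))
    (pick : Fin n → (Fin n → ℕ) → ℕ) {k : ℕ} (x : Fin n) (hxS : x ∈ S) (hk : x.val < k) :
    greedyC base S pick k x = pick x (greedyC base S pick x.val) := by
  rw [greedyC_stable base S pick hk x (Or.inr (Nat.lt_succ_self _))]
  show (if x.val = x.val ∧ x ∈ S then _ else _) = _
  rw [if_pos ⟨rfl, hxS⟩]

lemma greedyC_base {n : ℕ} (base : Fin n → ℕ) (S : Finset (Fin n))
    (pick : Fin n → (Fin n → ℕ) → ℕ) (k : ℕ) (x : Fin n) (hxS : x ∉ S) :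
    greedyC base S pick k x = base x := by
  rw [greedyC_stable base S pick (Nat.zero_le k) x (Or.inl hxS)]; rfl

set_option maxHeartbeats 3200000 in
theorem dynMinimal_triangle_vertex_big (F : ∀ n : ℕ, SimpleGraph (Fin n) → Prop)
    (hF : Hereditary F) (ℓ : ℕ) (hl : 5 ≤ ℓ) {n : ℕ} (G : SimpleGraph (Fin n))
    (hG : DynMinimal F ℓ G) :
    ∀ u v w, G.Adj u v → G.Adj v w → G.Adj w u → ℓ ≤ deg G u := by
  classical
  intro u v w huv hvw hwu
  by_contra hcon
  push_neg at hcon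
  obtain ⟨hGF, hGnot, hmin⟩ := hG
  apply hGnot
  intro L hL
  -- neighborhoods
  set N : Fin n → Finset (Fin n) := fun p => univ.filter (fun q => G.Adj p q) with hNdef
  have hNmem : ∀ p q : Fin n, q ∈ N p ↔ G.Adj p q := by intro p q; simp [hNdef]
  have hNcard : ∀ p : Fin n, (N p).card = deg G p := by intro p; simp [deg, hNdef]
  -- the special degree-2 neighbors of u (other than v, w)
  set X : Finset (Fin n) := (N u).filter (fun x => deg G x = 2 ∧ x ≠ v ∧ x ≠ w) with hXdef
  have hXmem : ∀ x, x ∈ X ↔ (G.Adj u x ∧ (deg G x = 2 ∧ x ≠ v ∧ x ≠ w)) := by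
    intro x; rw [hXdef, mem_filter, hNmem]
  have huX : u ∉ X := by
    intro h
    exact G.loopless.irrefl u ((hXmem u).mp h).1
  set D : Finset (Fin n) := insert u X with hDdef
  have hDmem : ∀ p, p ∈ D ↔ p = u ∨ p ∈ X := by intro p; rw [hDdef, mem_insert]
  have huD : u ∈ D := (hDmem u).mpr (Or.inl rfl)
  have hXD : ∀ x, x ∈ X → x ∈ D := fun x hx => (hDmem x).mpr (Or.inr hx)
  have hvD : v ∉ D := by
    rw [hDmem]
    rintro (h | hv)
    · rw [h] at huv; exact G.loopless.irrefl u huv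
    · exact ((hXmem v).mp hv).2.2.1 rfl
  have hwD : w ∉ D := by
    rw [hDmem]
    rintro (h | hw)
    · rw [h] at hwu; exact G.loopless.irrefl u hwu.symm
    · exact ((hXmem w).mp hw).2.2.2 rfl
  -- the "other neighbor" map
  set y : Fin n → Fin n := fun x =>
    if h : ((N x).erase u).Nonempty then ((N x).erase u).min' h else u with hydef
  have hyfacts : ∀ x, x ∈ X → y x ∈ (N x).erase u := by
    intro x hx
    have hux : u ∈ N x := (hNmem x u).mpr ((hXmem x).mp hx).1.symm
    have hcard1 : ((N x).erase u).card = 1 := by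
      rw [card_erase_of_mem hux, hNcard, ((hXmem x).mp hx).2.1]
    have hne : ((N x).erase u).Nonempty := card_pos.mp (by omega)
    rw [hydef]
    simp only []
    rw [dif_pos hne]
    exact min'_mem _ hne
  have hyu : ∀ x, x ∈ X → y x ≠ u := fun x hx => (mem_erase.mp (hyfacts x hx)).1
  have hyadj : ∀ x, x ∈ X → G.Adj x (y x) := fun x hx =>
    (hNmem x (y x)).mp (mem_erase.mp (hyfacts x hx)).2
  have hNxeq : ∀ x, x ∈ X → N x = {u, y x} := by
    intro x hx
    have hux : u ∈ N x := (hNmem x u).mpr ((hXmem x).mp hx).1.symm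
    have hsub : ({u, y x} : Finset (Fin n)) ⊆ N x := by
      intro t ht
      rcases mem_insert.mp ht with rfl | ht
      · exact hux
      · rw [mem_singleton.mp ht]; exact (mem_erase.mp (hyfacts x hx)).2
    have hc2 : ({u, y x} : Finset (Fin n)).card = 2 := by
      rw [card_insert_of_notMem (by simp [Ne.symm (hyu x hx)]), card_singleton]
    symm
    apply Finset.eq_of_subset_of_card_le hsub
    rw [hNcard, ((hXmem x).mp hx).2.1, hc2]
  have hNxmem : ∀ x, x ∈ X → ∀ q, q ∈ N x ↔ (q = u ∨ q = y x) := by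
    intro x hx q; rw [hNxeq x hx]; simp
  -- the "anchor" map
  set T : Fin n → Fin n := fun x =>
    if hB : (((N (y x)).erase x).filter (fun t => t ∉ D)).Nonempty then
      (((N (y x)).erase x).filter (fun t => t ∉ D)).min' hB
    else if hA : ((N (y x)).erase x).Nonempty then ((N (y x)).erase x).min' hA else u
    with hTdef
  -- the subgraph H on the complement of D
  have hn0 : 0 < n := Fin.pos u
  set iso := Dᶜ.orderIsoOfFin rfl with hisodef
  set fv : Fin Dᶜ.card → Fin n := fun i => ((iso i : {x // x ∈ Dᶜ}) : Fin n) with hfvdef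
  have hfvD : ∀ i, fv i ∉ D := fun i => Finset.mem_compl.mp (iso i).2
  have hfvinj : Function.Injective fv := by
    intro a b h
    exact iso.injective (Subtype.ext h)
  set H : SimpleGraph (Fin Dᶜ.card) := SimpleGraph.comap fv G with hHdef
  have hHadj : ∀ a b, H.Adj a b ↔ G.Adj (fv a) (fv b) := fun a b => Iff.rfl
  have hHF : F Dᶜ.card H := hF n _ G H hGF ⟨⟨fv, hfvinj⟩, fun a b h => h⟩
  have hm : Dᶜ.card < n := by
    rw [Finset.card_compl]
    have h1 : 0 < D.card := card_pos.mpr ⟨u, huD⟩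
    have h2 : D.card ≤ Fintype.card (Fin n) := Finset.card_le_univ D
    simp only [Fintype.card_fin] at *
    omega
  have hedges : nedges H ≤ nedges G := by
    apply Finset.card_le_card_of_injOn (Sym2.map fv)
    · intro e he
      simp only [coe_filter, mem_coe, mem_filter, mem_univ, Set.mem_univ, true_and, Set.mem_setOf_eq, coe_univ] at he ⊢
      induction e with
      | _ a b =>
        rw [Sym2.map_pair_eq, SimpleGraph.mem_edgeSet] at *
        exact he
    · exact (Sym2.map.injective hfvinj).injOn
  have hsize : gsize H < gsize G := by
    unfold gsize
    omega
  obtain ⟨c0, hc0L, hc0P, hc0dyn⟩ := hmin _ H hHF hsize (fun i => L (fv i)) (fun i => hL _)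
  -- transport the coloring back
  set c1 : Fin n → ℕ := fun p =>
    if h : p ∈ Dᶜ then c0 (iso.symm ⟨p, h⟩) else 0 with hc1def
  have hc1 : ∀ p (hp : p ∉ D), c1 p = c0 (iso.symm ⟨p, Finset.mem_compl.mpr hp⟩) := by
    intro p hp
    rw [hc1def]
    simp only []
    rw [dif_pos (Finset.mem_compl.mpr hp)]
  have hfvsymm : ∀ p (hp : p ∉ D), fv (iso.symm ⟨p, Finset.mem_compl.mpr hp⟩) = p := by
    intro p hp
    rw [hfvdef]
    simp only []
    rw [iso.apply_symm_apply]
  have hc1L : ∀ p, p ∉ D → c1 p ∈ L p := by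
    intro p hp
    rw [hc1 p hp]
    have := hc0L (iso.symm ⟨p, Finset.mem_compl.mpr hp⟩)
    rwa [hfvsymm p hp] at this
  have hc1P : ∀ p q, p ∉ D → q ∉ D → G.Adj p q → c1 p ≠ c1 q := by
    intro p q hp hq hadj
    rw [hc1 p hp, hc1 q hq]
    apply hc0P
    show G.Adj (fv _) (fv _)
    rw [hfvsymm p hp, hfvsymm q hq]
    exact hadj
  have hdegH : ∀ p (hp : p ∉ D),
      deg H (iso.symm ⟨p, Finset.mem_compl.mpr hp⟩) = ((N p).filter (fun q => q ∉ D)).card := by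
    intro p hp
    have h1 : deg H (iso.symm ⟨p, Finset.mem_compl.mpr hp⟩) =
        (univ.filter (fun j => H.Adj (iso.symm ⟨p, Finset.mem_compl.mpr hp⟩) j)).card := by
      simp [deg]; convert rfl
    rw [h1]
    apply Finset.card_bij (fun j _ => fv j)
    · intro j hj
      simp only [mem_filter, mem_univ, true_and] at hj ⊢
      constructor
      · rw [hNmem]
        have : G.Adj (fv (iso.symm ⟨p, Finset.mem_compl.mpr hp⟩)) (fv j) := hj
        rwa [hfvsymm p hp] at this
      · exact hfvD j
    · intro a _ b _ h
      exact hfvinj h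
    · intro q hq
      simp only [mem_filter, mem_univ, true_and] at hq
      obtain ⟨hqN, hqD⟩ := hq
      refine ⟨iso.symm ⟨q, Finset.mem_compl.mpr hqD⟩, ?_, hfvsymm q hqD⟩
      simp only [mem_filter, mem_univ, true_and]
      show G.Adj (fv _) (fv _)
      rw [hfvsymm p hp, hfvsymm q hqD]
      exact (hNmem p q).mp hqN
  have hdyn1 : ∀ p (hp : p ∉ D), 2 ≤ ((N p).filter (fun q => q ∉ D)).card →
      ∃ a b, G.Adj p a ∧ G.Adj p b ∧ a ∉ D ∧ b ∉ D ∧ c1 a ≠ c1 b := by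
    intro p hp h2
    obtain ⟨a', b', ha, hb, hne⟩ :=
      hc0dyn (iso.symm ⟨p, Finset.mem_compl.mpr hp⟩) (by rw [hdegH p hp]; exact h2)
    have ha' : G.Adj (fv (iso.symm ⟨p, Finset.mem_compl.mpr hp⟩)) (fv a') := ha
    have hb' : G.Adj (fv (iso.symm ⟨p, Finset.mem_compl.mpr hp⟩)) (fv b') := hb
    rw [hfvsymm p hp] at ha' hb'
    refine ⟨fv a', fv b', ha', hb', hfvD a', hfvD b', ?_⟩
    rw [hc1 _ (hfvD a'), hc1 _ (hfvD b')]
    have e1 : iso.symm ⟨fv a', Finset.mem_compl.mpr (hfvD a')⟩ = a' := by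
      rw [show (⟨fv a', Finset.mem_compl.mpr (hfvD a')⟩ : {x // x ∈ Dᶜ}) = iso a' from
        Subtype.ext rfl]
      exact iso.symm_apply_apply a'
    have e2 : iso.symm ⟨fv b', Finset.mem_compl.mpr (hfvD b')⟩ = b' := by
      rw [show (⟨fv b', Finset.mem_compl.mpr (hfvD b')⟩ : {x // x ∈ Dᶜ}) = iso b' from
        Subtype.ext rfl]
      exact iso.symm_apply_apply b'
    rw [e1, e2]
    exact hne
  -- pick the color of u
  set Fu : Finset ℕ := (N u).image (fun x => if x ∈ X then c1 (y x) else c1 x) with hFudef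
  have hFucard : Fu.card < ℓ := by
    apply lt_of_le_of_lt (card_image_le)
    rw [hNcard]
    exact hcon
  have hLune : (L u \ Fu).Nonempty := by
    apply card_pos.mp
    have h1 := Finset.le_card_sdiff Fu (L u)
    rw [hL u] at h1
    omega
  set cu : ℕ := (L u \ Fu).min' hLune with hcudef
  have hcuLF : cu ∈ L u ∧ cu ∉ Fu := by
    have := min'_mem _ hLune
    rw [← hcudef] at this
    exact mem_sdiff.mp this
  have hcuN : ∀ q, q ∈ N u → q ∉ X → cu ≠ c1 q := by
    intro q hq hqX heq
    apply hcuLF.2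
    rw [hFudef]
    apply mem_image.mpr ⟨q, hq, ?_⟩
    rw [if_neg hqX, heq]
  have hcuY : ∀ x, x ∈ X → cu ≠ c1 (y x) := by
    intro x hx heq
    apply hcuLF.2
    rw [hFudef]
    have hxN : x ∈ N u := by rw [hNmem]; exact ((hXmem x).mp hx).1
    apply mem_image.mpr ⟨x, hxN, ?_⟩
    rw [if_pos hx, heq]
  -- the base coloring and the greedy recoloring of X
  set base : Fin n → ℕ := fun p => if p = u then cu else c1 p with hbasedef
  set pick : Fin n → (Fin n → ℕ) → ℕ := fun x g =>
    if h : (L x \ ({u, y x, T x} : Finset (Fin n)).image g).Nonempty then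
      (L x \ ({u, y x, T x} : Finset (Fin n)).image g).min' h else 0 with hpickdef
  have hpick : ∀ x g, pick x g ∈ L x \ ({u, y x, T x} : Finset (Fin n)).image g := by
    intro x g
    have hcard3 : (({u, y x, T x} : Finset (Fin n)).image g).card ≤ 3 := by
      apply le_trans (card_image_le)
      apply le_trans (card_insert_le _ _)
      have := card_insert_le (y x) ({T x} : Finset (Fin n))
      simp only [card_singleton] at this
      omega
    have hne : (L x \ ({u, y x, T x} : Finset (Fin n)).image g).Nonempty := by
      apply card_pos.mp
      have h1 := Finset.le_card_sdiff (({u, y x, T x} : Finset (Fin n)).image g) (L x)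
      rw [hL x] at h1
      omega
    rw [hpickdef]
    simp only []
    rw [dif_pos hne]
    exact min'_mem _ hne
  set c : Fin n → ℕ := greedyC base X pick n with hcdef
  have hcbase : ∀ p, p ∉ X → c p = base p := fun p hp => greedyC_base base X pick n p hp
  have hcu' : c u = cu := by rw [hcbase u huX, hbasedef]; simp
  have hcD : ∀ p, p ∉ D → c p = c1 p := by
    intro p hp
    have hpu : p ≠ u := fun h => hp (h ▸ huD)
    have hpX : p ∉ X := fun h => hp (hXD p h)
    rw [hcbase p hpX, hbasedef]
    simp [hpu]
  have hcXval : ∀ x, x ∈ X → c x = pick x (greedyC base X pick x.val) := by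
    intro x hx
    exact greedyC_spec base X pick x hx x.isLt
  have hgag : ∀ (x t : Fin n), (t ∉ X ∨ t.val < x.val) →
      greedyC base X pick x.val t = c t := by
    intro x t ht
    rw [hcdef]
    exact (greedyC_stable base X pick (le_of_lt x.isLt) t ht).symm
  have hcXL : ∀ x, x ∈ X → c x ∈ L x := by
    intro x hx
    rw [hcXval x hx]
    exact (mem_sdiff.mp (hpick x _)).1
  have hcXne : ∀ x, x ∈ X → ∀ t, (t = u ∨ t = y x ∨ t = T x) →
      (t ∉ X ∨ t < x) → c x ≠ c t := by
    intro x hx t htmem hord heq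
    have hord' : t ∉ X ∨ t.val < x.val := hord.imp id (fun h => h)
    have h2 := (mem_sdiff.mp (hpick x (greedyC base X pick x.val))).2
    apply h2
    apply mem_image.mpr
    refine ⟨t, ?_, ?_⟩
    · rcases htmem with rfl | rfl | rfl <;> simp
    · rw [hgag x t hord', ← heq, hcXval x hx]
  have hXu : ∀ x, x ∈ X → c x ≠ c u := fun x hx => hcXne x hx u (Or.inl rfl) (Or.inl huX)
  -- membership in lists
  have hcL : ∀ p, c p ∈ L p := by
    intro p
    by_cases hpX : p ∈ X
    · exact hcXL p hpX
    · by_cases hpu : p = u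
      · subst hpu; rw [hcu']; exact hcuLF.1
      · have hpD : p ∉ D := by rw [hDmem]; tauto
        rw [hcD p hpD]
        exact hc1L p hpD
  -- properness
  have hkey : ∀ p q, G.Adj p q → p ∈ D → c p ≠ c q := by
    intro p q hadj hp
    rcases (hDmem p).mp hp with hpu | hpX
    · -- p = u
      rw [hpu] at hadj ⊢
      by_cases hq : q ∈ D
      · rcases (hDmem q).mp hq with hqu | hqX
        · rw [hqu] at hadj; exact absurd hadj (G.loopless.irrefl u)
        · exact (hXu q hqX).symm
      · rw [hcu', hcD q hq]
        exact hcuN q ((hNmem u q).mpr hadj) (fun h => hq (hXD q h))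
    · -- p ∈ X
      have hqN : q ∈ N p := (hNmem p q).mpr hadj
      rcases (hNxmem p hpX q).mp hqN with hqu | hqy
      · rw [hqu]; exact hXu p hpX
      · -- q = y p
        rw [hqy] at hadj ⊢
        by_cases hq : y p ∈ X
        · -- mutual pair
          have hpyq : p = y (y p) := by
            have hpN : p ∈ N (y p) := (hNmem (y p) p).mpr hadj.symm
            rcases (hNxmem (y p) hq p).mp hpN with hpu | h
            · rw [hpu] at hpX; exact absurd hpX huX
            · exact h
          rcases lt_trichotomy p (y p) with hlt | heq | hlt
          · have := hcXne (y p) hq p (Or.inr (Or.inl hpyq)) (Or.inr hlt)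
            exact this.symm
          · exact absurd heq hadj.ne
          · exact hcXne p hpX (y p) (Or.inr (Or.inl rfl)) (Or.inr hlt)
        · exact hcXne p hpX (y p) (Or.inr (Or.inl rfl)) (Or.inl hq)
  have hprop : IsProper G c := by
    intro p q hadj
    by_cases hp : p ∈ D
    · exact hkey p q hadj hp
    · by_cases hq : q ∈ D
      · exact (hkey q p hadj.symm hq).symm
      · rw [hcD p hp, hcD q hq]
        exact hc1P p q hp hq hadj
  -- dynamic property
  have hdynG : ∀ p, 2 ≤ deg G p → ∃ a b, G.Adj p a ∧ G.Adj p b ∧ c a ≠ c b := by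
    intro p hdp
    by_cases hpu : p = u
    · subst hpu
      exact ⟨v, w, huv, hwu.symm, by
        rw [hcD v hvD, hcD w hwD]; exact hc1P v w hvD hwD hvw⟩
    by_cases hpX : p ∈ X
    · refine ⟨u, y p, ((hXmem p).mp hpX).1.symm, hyadj p hpX, ?_⟩
      by_cases hyD : y p ∈ D
      · have hyX : y p ∈ X := by
          rcases (hDmem (y p)).mp hyD with h | h
          · exact absurd h (hyu p hpX)
          · exact h
        exact (hXu (y p) hyX).symm
      · rw [hcu', hcD (y p) hyD]
        exact hcuY p hpX
    · -- p ∉ D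
      have hpD : p ∉ D := by rw [hDmem]; tauto
      by_cases h2 : 2 ≤ ((N p).filter (fun q => q ∉ D)).card
      · obtain ⟨a, b, ha, hb, haD, hbD, hne⟩ := hdyn1 p hpD h2
        exact ⟨a, b, ha, hb, by rw [hcD a haD, hcD b hbD]; exact hne⟩
      · push_neg at h2
        have hNp2 : 2 ≤ (N p).card := by rw [hNcard]; exact hdp
        have hexD : ∃ x ∈ N p, x ∈ D := by
          by_contra hno
          push_neg at hno
          have heq : (N p).filter (fun q => q ∉ D) = N p := filter_eq_self.mpr hno
          rw [heq] at h2
          omega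
        by_cases hu : u ∈ N p
        · by_cases hxX : ∃ x ∈ N p, x ∈ X
          · obtain ⟨x, hxN, hxX⟩ := hxX
            exact ⟨u, x, (hNmem p u).mp hu, (hNmem p x).mp hxN, (hXu x hxX).symm⟩
          · push_neg at hxX
            -- all D-neighbors of p equal u, so deg G p = 2 and p ∈ {v, w}
            have hDsub : (N p).filter (fun q => q ∈ D) ⊆ {u} := by
              intro t ht
              rw [mem_filter] at ht
              rcases (hDmem t).mp ht.2 with htu | h
              · rw [htu]; exact mem_singleton_self u
              · exact absurd h (hxX t ht.1)
            have hsub2 : N p ⊆ insert u ((N p).filter (fun q => q ∉ D)) := by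
              intro t ht
              by_cases htD : t ∈ D
              · have h1 := hDsub (mem_filter.mpr ⟨ht, htD⟩)
                rw [mem_singleton] at h1
                exact h1 ▸ mem_insert_self _ _
              · exact mem_insert_of_mem (mem_filter.mpr ⟨ht, htD⟩)
            have hle : (N p).card ≤ ((N p).filter (fun q => q ∉ D)).card + 1 :=
              le_trans (card_le_card hsub2) (card_insert_le _ _)
            have hdeg2 : deg G p = 2 := by
              rw [← hNcard]
              omega
            have hpNu : p ∈ N u := (hNmem u p).mpr ((hNmem p u).mp hu).symm
            have hnot : ¬ (deg G p = 2 ∧ p ≠ v ∧ p ≠ w) := fun h =>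
              hpX ((hXmem p).mpr ⟨(hNmem u p).mp hpNu, h⟩)
            have hpvw : p = v ∨ p = w := by tauto
            rcases hpvw with rfl | rfl
            · refine ⟨u, w, huv.symm, hvw, ?_⟩
              rw [hcu', hcD w hwD]
              exact hcuN w ((hNmem u w).mpr hwu.symm) (fun h => hwD (hXD w h))
            · refine ⟨u, v, hwu, hvw.symm, ?_⟩
              rw [hcu', hcD v hvD]
              exact hcuN v ((hNmem u v).mpr huv) (fun h => hvD (hXD v h))
        · -- u ∉ N p
          obtain ⟨x, hxN, hxD⟩ := hexD
          have hxX : x ∈ X := by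
            rcases (hDmem x).mp hxD with hxu | h
            · rw [hxu] at hxN; exact absurd hxN hu
            · exact h
          have hpyx : p = y x := by
            have hpN : p ∈ N x := (hNmem x p).mpr ((hNmem p x).mp hxN).symm
            rcases (hNxmem x hxX p).mp hpN with hpu | h
            · rw [hpu] at hpD; exact absurd huD hpD
            · exact h
          by_cases hB : (((N (y x)).erase x).filter (fun t => t ∉ D)).Nonempty
          · have hTval : T x = (((N (y x)).erase x).filter (fun t => t ∉ D)).min' hB := by
              rw [hTdef]; simp only []; rw [dif_pos hB]
            have hTmem := min'_mem _ hB
            rw [← hTval, mem_filter, mem_erase, ← hpyx] at hTmem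
            obtain ⟨⟨hTx, hTN⟩, hTD⟩ := hTmem
            refine ⟨x, T x, (hNmem p x).mp hxN, (hNmem p (T x)).mp hTN, ?_⟩
            exact hcXne x hxX (T x) (Or.inr (Or.inr rfl)) (Or.inl fun h => hTD (hXD _ h))
          · -- every neighbor of p lies in X
            have hsubX : ∀ t ∈ N p, t ∈ X := by
              intro t htN
              by_cases htx : t = x
              · exact htx ▸ hxX
              · have htD : t ∈ D := by
                  by_contra htD
                  apply hB
                  refine ⟨t, ?_⟩
                  rw [mem_filter, mem_erase, ← hpyx]
                  exact ⟨⟨htx, htN⟩, htD⟩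
                rcases (hDmem t).mp htD with rfl | h
                · exact absurd htN hu
                · exact h
            have hNpne : (N p).Nonempty := card_pos.mp (by omega)
            set xm := (N p).max' hNpne with hxmdef
            have hxmN : xm ∈ N p := max'_mem _ _
            have hxmX : xm ∈ X := hsubX xm hxmN
            have hpyxm : p = y xm := by
              have hpN : p ∈ N xm := (hNmem xm p).mpr ((hNmem p xm).mp hxmN).symm
              rcases (hNxmem xm hxmX p).mp hpN with hpu | h
              · rw [hpu] at hpD; exact absurd huD hpD
              · exact h
            have hAeq : (N (y xm)).erase xm = (N p).erase xm := by rw [← hpyxm]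
            have hBem : ¬ (((N (y xm)).erase xm).filter (fun t => t ∉ D)).Nonempty := by
              rw [hAeq]
              rintro ⟨t, ht⟩
              rw [mem_filter, mem_erase] at ht
              exact ht.2 (hXD t (hsubX t ht.1.2))
            have hAne' : ((N (y xm)).erase xm).Nonempty := by
              rw [hAeq]
              apply card_pos.mp
              rw [card_erase_of_mem hxmN]
              omega
            have hTval : T xm = ((N (y xm)).erase xm).min' hAne' := by
              rw [hTdef]; simp only []; rw [dif_neg hBem, dif_pos hAne']
            have hTmem : T xm ∈ (N p).erase xm := by
              rw [← hAeq, hTval]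
              exact min'_mem _ hAne'
            obtain ⟨hTne, hTN⟩ := mem_erase.mp hTmem
            have hTlt : T xm < xm := lt_of_le_of_ne (le_max' _ _ hTN) hTne
            refine ⟨xm, T xm, (hNmem p xm).mp hxmN, (hNmem p (T xm)).mp hTN, ?_⟩
            exact hcXne xm hxmX (T xm) (Or.inr (Or.inr rfl)) (Or.inr hTlt)
  exact ⟨c, hcL, hprop, hdynG⟩
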